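/- Let s be a prime power, let f ∈ F_s[X] have degree t with no roots in F_s, let G = (F_s[X]/(f))^*, and define Ψ(S) = ∏_{a ∈ F_s} (ξ-a)^{S(a)} for a multiset S over F_s. For each c ∈ G, the code C = {S ∈ S_{n,s} : Ψ(S) = c} corrects t deletions: if S_1, S_2 ∈ C and there exist multisets E_1, E_2 with |E_1| = |E_2| ≤ t and S_1 \ E_1 = S_2 \ E_2 with |E_1| = |E_2|, where E_i ≤ S_i coordinatewise, then S_1 = S_2. -/

import Mathlib

open Polynomial

def simplex (n q : ℕ) : Finset (Fin q → ℕ) := Finset.Nat.antidiagonalTuple q n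

lemma count_roots_prod_pow {F : Type*} [Field F] [Fintype F] [DecidableEq F] (E : F → ℕ) (b : F) :
    (∏ a : F, (X - C a) ^ E a).roots.count b = E b := by
  classical
  have hne : ∀ a ∈ Finset.univ (α := F), ((X - C a) ^ E a : F[X]) ≠ 0 :=
    fun a _ => pow_ne_zero _ (X_sub_C_ne_zero a)
  rw [roots_prod _ _ (Finset.prod_ne_zero_iff.mpr hne)]
  rw [Multiset.count_bind]
  have key : ∀ a : F, (((X - C a) ^ E a : F[X]).roots.count b) = if b = a then E a else 0 := by
    intro a
    rw [roots_pow, roots_X_sub_C, Multiset.count_nsmul, Multiset.count_singleton]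
    split <;> simp
  calc (Multiset.map (fun a => ((X - C a) ^ E a : F[X]).roots.count b) Finset.univ.val).sum
      = (Multiset.map (fun a => if b = a then E a else 0) Finset.univ.val).sum := by
        congr 1; exact Multiset.map_congr rfl (fun a _ => key a)
    _ = ∑ a : F, if b = a then E a else 0 := rfl
    _ = E b := by rw [Finset.sum_ite_eq Finset.univ b E]; simp

/-- The affine polynomial Sidon-type code corrects `t` deletions: two codewords
of the same syndrome class that give the same received multiset after at most
`t` deletions each must coincide. -/
theorem affine_polynomial_code_corrects_deletions
    (F : Type*) [Field F] [Fintype F] (n t : ℕ) (f : F[X])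
    (hdeg : f.natDegree = t) (hroots : ∀ a : F, f.eval a ≠ 0)
    (c : F[X] ⧸ Ideal.span {f})
    (S₁ S₂ : F → ℕ) (hS₁ : ∑ a, S₁ a = n) (hS₂ : ∑ a, S₂ a = n)
    (hc₁ : Ideal.Quotient.mk (Ideal.span {f}) (∏ a : F, (X - C a) ^ S₁ a) = c)
    (hc₂ : Ideal.Quotient.mk (Ideal.span {f}) (∏ a : F, (X - C a) ^ S₂ a) = c)
    (E₁ E₂ : F → ℕ) (hE₁ : ∀ a, E₁ a ≤ S₁ a) (hE₂ : ∀ a, E₂ a ≤ S₂ a)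
    (hcard : ∑ a, E₁ a = ∑ a, E₂ a) (hle : ∑ a, E₁ a ≤ t)
    (hrec : ∀ a, S₁ a - E₁ a = S₂ a - E₂ a) :
    S₁ = S₂ := by
  classical
  set R : F → ℕ := fun a => S₁ a - E₁ a with hR
  have hS1eq : ∀ a, S₁ a = R a + E₁ a := fun a => (Nat.sub_add_cancel (hE₁ a)).symm
  have hS2eq : ∀ a, S₂ a = R a + E₂ a := by
    intro a
    have : R a = S₂ a - E₂ a := hrec a
    rw [this]
    exact (Nat.sub_add_cancel (hE₂ a)).symm
  suffices hE : E₁ = E₂ by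
    funext a; rw [hS1eq a, hS2eq a, hE]
  have hf0 : f ≠ 0 := fun h => hroots 0 (by simp [h])
  set I := Ideal.span {f} with hI
  set P₁ := ∏ a : F, (X - C a) ^ E₁ a with hP₁
  set P₂ := ∏ a : F, (X - C a) ^ E₂ a with hP₂
  have hfI : Ideal.Quotient.mk I f = 0 :=
    Ideal.Quotient.eq_zero_iff_mem.mpr (Ideal.subset_span (Set.mem_singleton f))
  have hunit : ∀ a : F, IsUnit (Ideal.Quotient.mk I (X - C a)) := by
    intro a
    have hcop : IsCoprime (X - C a : F[X]) f := by
      rw [(irreducible_X_sub_C a).coprime_iff_not_dvd, dvd_iff_isRoot]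
      exact hroots a
    obtain ⟨u, v, huv⟩ := hcop
    have := congrArg (Ideal.Quotient.mk I) huv
    simp only [map_add, map_mul, hfI, mul_zero, add_zero, map_one] at this
    exact IsUnit.of_mul_eq_one _ (by rw [mul_comm]; exact this)
  have hprodunit : IsUnit (Ideal.Quotient.mk I (∏ a : F, (X - C a) ^ R a)) := by
    rw [map_prod]
    refine Finset.prod_induction _ IsUnit (fun _ _ => IsUnit.mul) isUnit_one fun a _ => ?_
    rw [map_pow]
    exact (hunit a).pow _
  have hkey : Ideal.Quotient.mk I P₁ = Ideal.Quotient.mk I P₂ := by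
    have h12 := hc₁.trans hc₂.symm
    have h1 : ∏ a : F, (X - C a) ^ S₁ a = (∏ a : F, (X - C a) ^ R a) * P₁ := by
      rw [hP₁, ← Finset.prod_mul_distrib]
      exact Finset.prod_congr rfl fun a _ => by rw [← pow_add, ← hS1eq]
    have h2 : ∏ a : F, (X - C a) ^ S₂ a = (∏ a : F, (X - C a) ^ R a) * P₂ := by
      rw [hP₂, ← Finset.prod_mul_distrib]
      exact Finset.prod_congr rfl fun a _ => by rw [← pow_add, ← hS2eq]
    rw [h1, h2, map_mul, map_mul] at h12
    exact hprodunit.mul_left_cancel h12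
  have hmon1 : P₁.Monic := monic_prod_of_monic _ _ fun a _ => (monic_X_sub_C a).pow _
  have hmon2 : P₂.Monic := monic_prod_of_monic _ _ fun a _ => (monic_X_sub_C a).pow _
  have hdeg1 : P₁.natDegree = ∑ a, E₁ a := by
    rw [hP₁, natDegree_prod _ _ (fun a _ => pow_ne_zero _ (X_sub_C_ne_zero a))]
    simp [natDegree_pow]
  have hdeg2 : P₂.natDegree = ∑ a, E₂ a := by
    rw [hP₂, natDegree_prod _ _ (fun a _ => pow_ne_zero _ (X_sub_C_ne_zero a))]
    simp [natDegree_pow]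
  have hP : P₁ = P₂ := by
    by_contra hne
    have hdvd : f ∣ P₁ - P₂ := by
      rwa [Ideal.Quotient.eq, hI, Ideal.mem_span_singleton] at hkey
    have hsub0 : P₁ - P₂ ≠ 0 := sub_ne_zero.mpr hne
    have h1 : f.natDegree ≤ (P₁ - P₂).natDegree := natDegree_le_of_dvd hdvd hsub0
    have hdegeq : P₁.degree = P₂.degree := by
      rw [degree_eq_natDegree hmon1.ne_zero, degree_eq_natDegree hmon2.ne_zero,
        hdeg1, hdeg2, hcard]
    have hdlt : (P₁ - P₂).degree < P₁.degree :=
      degree_sub_lt hdegeq hmon1.ne_zero (by rw [hmon1.leadingCoeff, hmon2.leadingCoeff])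
    have h2 : (P₁ - P₂).natDegree < P₁.natDegree := natDegree_lt_natDegree hsub0 hdlt
    omega
  have hcnt : ∀ b, E₁ b = E₂ b := by
    intro b
    have h : P₁.roots.count b = P₂.roots.count b := by rw [hP]
    rw [hP₁, hP₂, count_roots_prod_pow, count_roots_prod_pow] at h
    exact h
  exact funext hcnt
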